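/- The moment matrix of the uniform measure on permutations of {1,...,m} constrained by i_c → j_c, with respect to the model vector x(π) = (1, (I_{ij}(π))_{(i,j)≠(i_c,j_c), i<j}), is obtained from the unconstrained full PWO moment matrix (without constant term) of order m(m−1)/2 by a simultaneous row-and-column permutation; in particular the two matrices have the same determinant and the same eigenvalue multiset. -/

import Mathlib

/-- Index type of the pairs `{i < j}` of components. -/
abbrev PairIdx (m : ℕ) := {p : Fin m × Fin m // p.1 < p.2}

/-- The PWO correlation-pattern matrix `V`. -/
noncomputable def Vmat (m : ℕ) : Matrix (PairIdx m) (PairIdx m) ℝ := fun a b =>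
  if a = b then 0
  else if a.1.1 = b.1.1 ∨ a.1.2 = b.1.2 then 1
  else if a.1.2 = b.1.1 ∨ a.1.1 = b.1.2 then -1
  else 0

/-- The model vector `x(π) = (1, (I_{ij}(π))_{(i,j) ≠ (i_c,j_c), i<j})` of the
constrained model. -/
noncomputable def xcon (m : ℕ) (ic jc : Fin m) (π : Equiv.Perm (Fin m)) :
    (Unit ⊕ {p : PairIdx m // p.1 ≠ (ic, jc)}) → ℝ
  | Sum.inl _ => 1
  | Sum.inr p => if π.symm p.1.1.1 < π.symm p.1.1.2 then 1 else -1

/-- The moment matrix of the uniform measure on the permutations with `i_c`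
before `j_c`, with respect to the constrained model vector. -/
noncomputable def Mcon (m : ℕ) (ic jc : Fin m) :
    Matrix (Unit ⊕ {p : PairIdx m // p.1 ≠ (ic, jc)})
           (Unit ⊕ {p : PairIdx m // p.1 ≠ (ic, jc)}) ℝ :=
  ((Finset.univ.filter fun π : Equiv.Perm (Fin m) =>
      π.symm ic < π.symm jc).card : ℝ)⁻¹ •
    ∑ π ∈ Finset.univ.filter fun π : Equiv.Perm (Fin m) => π.symm ic < π.symm jc,
      Matrix.vecMulVec (xcon m ic jc π) (xcon m ic jc π)

/-! ### Auxiliary machinery -/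

/-- The sign indicator `I_{ab}(π) = ±1` of `a` preceding `b` in `π`. -/
noncomputable def sg {m : ℕ} (a b : Fin m) (π : Equiv.Perm (Fin m)) : ℝ :=
  if π.symm a < π.symm b then 1 else -1

lemma sg_mul_self {m : ℕ} (a b : Fin m) (π : Equiv.Perm (Fin m)) :
    sg a b π * sg a b π = 1 := by
  unfold sg; split_ifs <;> norm_num

lemma sg_flip {m : ℕ} {a b : Fin m} (h : a ≠ b) (π : Equiv.Perm (Fin m)) :
    sg b a π = - sg a b π := by
  have h2 : π.symm a ≠ π.symm b := fun he => h (π.symm.injective he)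
  unfold sg
  rcases lt_or_gt_of_ne h2 with hl | hl
  · rw [if_neg (asymm hl), if_pos hl]
  · rw [if_pos hl, if_neg (asymm hl)]; norm_num

lemma sg_comp_swap {m : ℕ} (c d a b : Fin m) (π : Equiv.Perm (Fin m)) :
    sg a b (Equiv.swap c d * π) = sg (Equiv.swap c d a) (Equiv.swap c d b) π := rfl

lemma sg_comp_rev {m : ℕ} {a b : Fin m} (h : a ≠ b) (π : Equiv.Perm (Fin m)) :
    sg a b (π * Fin.revPerm) = - sg a b π := by
  have h2 : π.symm a ≠ π.symm b := fun he => h (π.symm.injective he)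
  show (if Fin.rev (π.symm a) < Fin.rev (π.symm b) then (1:ℝ) else -1) = - sg a b π
  unfold sg
  rcases lt_or_gt_of_ne h2 with hl | hl
  · rw [if_neg (by rw [Fin.rev_lt_rev]; exact asymm hl), if_pos hl]
  · rw [if_pos (Fin.rev_lt_rev.2 hl), if_neg (asymm hl)]; norm_num

lemma sum_sg {m : ℕ} {a b : Fin m} (hab : a ≠ b) :
    ∑ π : Equiv.Perm (Fin m), sg a b π = 0 := by
  have h : ∑ π : Equiv.Perm (Fin m), sg a b π
      = ∑ π : Equiv.Perm (Fin m), -(sg a b π) := by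
    rw [← Equiv.sum_comp (Equiv.mulRight (Fin.revPerm (n := m)))
        (fun π => sg a b π)]
    refine Finset.sum_congr rfl fun π _ => ?_
    simp only [Equiv.coe_mulRight]
    rw [sg_comp_rev hab]
  rw [Finset.sum_neg_distrib] at h
  linarith

lemma sum_sg_mul3 {m : ℕ} {a b c d e f : Fin m} (hab : a ≠ b) (hcd : c ≠ d)
    (hef : e ≠ f) :
    ∑ π : Equiv.Perm (Fin m), sg a b π * sg c d π * sg e f π = 0 := by
  have h : ∑ π : Equiv.Perm (Fin m), sg a b π * sg c d π * sg e f π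
      = ∑ π : Equiv.Perm (Fin m), -(sg a b π * sg c d π * sg e f π) := by
    rw [← Equiv.sum_comp (Equiv.mulRight (Fin.revPerm (n := m)))
        (fun π => sg a b π * sg c d π * sg e f π)]
    refine Finset.sum_congr rfl fun π _ => ?_
    simp only [Equiv.coe_mulRight]
    rw [sg_comp_rev hab, sg_comp_rev hcd, sg_comp_rev hef]; ring
  rw [Finset.sum_neg_distrib] at h
  linarith

lemma sum_sg_swap {m : ℕ} (u v a b c d : Fin m) :
    ∑ π : Equiv.Perm (Fin m), sg a b π * sg c d π
      = ∑ π : Equiv.Perm (Fin m),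
          sg (Equiv.swap u v a) (Equiv.swap u v b) π
            * sg (Equiv.swap u v c) (Equiv.swap u v d) π := by
  rw [← Equiv.sum_comp (Equiv.mulLeft (Equiv.swap u v))
      (fun π => sg a b π * sg c d π)]
  refine Finset.sum_congr rfl fun π _ => ?_
  simp only [Equiv.coe_mulLeft]
  rw [sg_comp_swap, sg_comp_swap]

lemma ite_three {x y z : ℕ} (hxy : x ≠ y) (hxz : x ≠ z) (hyz : y ≠ z) :
    ((if x < y then (1:ℝ) else -1) * (if x < z then (1:ℝ) else -1)
      + (if y < x then (1:ℝ) else -1) * (if y < z then (1:ℝ) else -1)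
      + (if z < x then (1:ℝ) else -1) * (if z < y then (1:ℝ) else -1)) = 1 := by
  split_ifs <;> first | omega | norm_num

lemma sg_three {m : ℕ} {a b c : Fin m} (hab : a ≠ b) (hac : a ≠ c) (hbc : b ≠ c)
    (π : Equiv.Perm (Fin m)) :
    sg a b π * sg a c π + sg b a π * sg b c π + sg c a π * sg c b π = 1 := by
  have h1 : (π.symm a).val ≠ (π.symm b).val :=
    fun h => hab (π.symm.injective (Fin.val_injective h))
  have h2 : (π.symm a).val ≠ (π.symm c).val :=
    fun h => hac (π.symm.injective (Fin.val_injective h))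
  have h3 : (π.symm b).val ≠ (π.symm c).val :=
    fun h => hbc (π.symm.injective (Fin.val_injective h))
  unfold sg
  simp only [Fin.lt_def]
  exact ite_three h1 h2 h3

lemma sum_sg_shared {m : ℕ} {a b c : Fin m} (hab : a ≠ b) (hac : a ≠ c)
    (hbc : b ≠ c) :
    ∑ π : Equiv.Perm (Fin m), sg a b π * sg a c π = (m.factorial : ℝ) / 3 := by
  have e1 : (∑ π : Equiv.Perm (Fin m), sg a b π * sg a c π)
      = ∑ π : Equiv.Perm (Fin m), sg b a π * sg b c π := by
    rw [sum_sg_swap a b a b a c]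
    simp only [Equiv.swap_apply_left, Equiv.swap_apply_right,
      Equiv.swap_apply_of_ne_of_ne hac.symm hbc.symm]
  have e2 : (∑ π : Equiv.Perm (Fin m), sg a b π * sg a c π)
      = ∑ π : Equiv.Perm (Fin m), sg c a π * sg c b π := by
    rw [sum_sg_swap a c a b a c]
    simp only [Equiv.swap_apply_left, Equiv.swap_apply_right,
      Equiv.swap_apply_of_ne_of_ne hab.symm hbc]
    exact Finset.sum_congr rfl fun π _ => mul_comm _ _
  have key : (3:ℝ) * ∑ π : Equiv.Perm (Fin m), sg a b π * sg a c π
      = (m.factorial : ℝ) := by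
    have h : (3:ℝ) * ∑ π : Equiv.Perm (Fin m), sg a b π * sg a c π
        = ∑ π : Equiv.Perm (Fin m),
            (sg a b π * sg a c π + sg b a π * sg b c π + sg c a π * sg c b π) := by
      rw [Finset.sum_add_distrib, Finset.sum_add_distrib, ← e1, ← e2]; ring
    rw [h, Finset.sum_congr rfl fun π _ => sg_three hab hac hbc π]
    simp [Finset.card_univ, Fintype.card_perm]
  linarith

lemma sum_sg_disjoint {m : ℕ} {a b c d : Fin m} (hab : a ≠ b) (h1 : c ≠ a)
    (h2 : c ≠ b) (h3 : d ≠ a) (h4 : d ≠ b) :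
    ∑ π : Equiv.Perm (Fin m), sg a b π * sg c d π = 0 := by
  have e1 : (∑ π : Equiv.Perm (Fin m), sg a b π * sg c d π)
      = ∑ π : Equiv.Perm (Fin m), sg b a π * sg c d π := by
    rw [sum_sg_swap a b a b c d]
    simp only [Equiv.swap_apply_left, Equiv.swap_apply_right,
      Equiv.swap_apply_of_ne_of_ne h1 h2, Equiv.swap_apply_of_ne_of_ne h3 h4]
  rw [show (∑ π : Equiv.Perm (Fin m), sg b a π * sg c d π)
      = ∑ π : Equiv.Perm (Fin m), -(sg a b π * sg c d π) from
    Finset.sum_congr rfl fun π _ => by rw [sg_flip hab]; ring] at e1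
  rw [Finset.sum_neg_distrib] at e1
  linarith

/-- The key second-moment computation over all permutations. -/
lemma pair_sum {m : ℕ} (p q : PairIdx m) :
    ∑ π : Equiv.Perm (Fin m), sg p.1.1 p.1.2 π * sg q.1.1 q.1.2 π
      = (m.factorial : ℝ) * ((1 + (3:ℝ)⁻¹ • Vmat m) p q) := by
  obtain ⟨⟨a, b⟩, hab⟩ := p
  obtain ⟨⟨c, d⟩, hcd⟩ := q
  have hab' : a ≠ b := ne_of_lt hab
  have hcd' : c ≠ d := ne_of_lt hcd
  simp only [Matrix.add_apply, Matrix.smul_apply, Matrix.one_apply, Vmat,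
    smul_eq_mul, Subtype.mk.injEq, Prod.mk.injEq]
  by_cases h1 : a = c ∧ b = d
  · obtain ⟨rfl, rfl⟩ := h1
    rw [if_pos ⟨rfl, rfl⟩, if_pos ⟨rfl, rfl⟩,
      Finset.sum_congr rfl fun π _ => sg_mul_self a b π]
    simp [Finset.card_univ, Fintype.card_perm]
  · rw [if_neg h1, if_neg h1]
    by_cases h2 : a = c ∨ b = d
    · rw [if_pos h2]
      rcases h2 with rfl | rfl
      · -- a = c
        have hbd : b ≠ d := fun hbd => h1 ⟨rfl, hbd⟩
        rw [sum_sg_shared hab' hcd' hbd]; ring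
      · -- b = d
        have hac : a ≠ c := fun hac => h1 ⟨hac, rfl⟩
        rw [Finset.sum_congr rfl fun π _ =>
          show sg a b π * sg c b π = sg b a π * sg b c π by
            rw [sg_flip hab', sg_flip hcd']; ring]
        rw [sum_sg_shared hab'.symm hcd'.symm hac]; ring
    · rw [if_neg h2]
      push_neg at h2
      by_cases h3 : b = c ∨ a = d
      · rw [if_pos h3]
        rcases h3 with rfl | rfl
        · -- b = c
          have had : a ≠ d := (hab.trans hcd).ne
          rw [Finset.sum_congr rfl fun π _ =>
            show sg a b π * sg b d π = -(sg b a π * sg b d π) by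
              rw [sg_flip hab']; ring]
          rw [Finset.sum_neg_distrib, sum_sg_shared hab'.symm hcd' had]; ring
        · -- a = d
          have hbc : b ≠ c := (hcd.trans hab).ne'
          rw [Finset.sum_congr rfl fun π _ =>
            show sg a b π * sg c a π = -(sg a b π * sg a c π) by
              rw [sg_flip hcd'.symm]; ring]
          rw [Finset.sum_neg_distrib, sum_sg_shared hab' hcd'.symm hbc]; ring
      · rw [if_neg h3]
        push_neg at h3
        rw [sum_sg_disjoint hab' h2.1.symm h3.1.symm h3.2.symm h2.2.symm]; ring

/-- The reindexing equivalence: `Sum.inl` goes to the constrained pair. -/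
def conEquiv (m : ℕ) (ic jc : Fin m) (hlt : ic < jc) :
    (Unit ⊕ {p : PairIdx m // p.1 ≠ (ic, jc)}) ≃ PairIdx m where
  toFun := Sum.elim (fun _ => ⟨(ic, jc), hlt⟩) (fun p => p.1)
  invFun p := if h : p.1 = (ic, jc) then Sum.inl () else Sum.inr ⟨p, h⟩
  left_inv := by
    rintro (⟨⟩ | ⟨p, hp⟩)
    · simp
    · simp only [Sum.elim_inr]
      exact dif_neg hp
  right_inv := by
    intro p
    by_cases h : p.1 = (ic, jc)
    · simp only [dif_pos h, Sum.elim_inl]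
      exact Subtype.ext h.symm
    · simp only [dif_neg h, Sum.elim_inr]

lemma Mcon_apply (m : ℕ) (ic jc : Fin m)
    (a b : Unit ⊕ {p : PairIdx m // p.1 ≠ (ic, jc)}) :
    Mcon m ic jc a b
      = ((Finset.univ.filter fun π : Equiv.Perm (Fin m) =>
            π.symm ic < π.symm jc).card : ℝ)⁻¹ *
        ∑ π ∈ Finset.univ.filter fun π : Equiv.Perm (Fin m) =>
            π.symm ic < π.symm jc,
          xcon m ic jc π a * xcon m ic jc π b := by
  unfold Mcon
  rw [Matrix.smul_apply, Matrix.sum_apply, smul_eq_mul]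
  exact congrArg _ (Finset.sum_congr rfl fun π _ =>
    Matrix.vecMulVec_apply (xcon m ic jc π) (xcon m ic jc π) a b)

/-- the constrained moment matrix is obtained from the
unconstrained full PWO moment matrix `I + V/3` by a simultaneous
row-and-column permutation; in particular the determinants and characteristic
polynomials (hence eigenvalue multisets) coincide. -/
theorem stmt16 (m : ℕ) (ic jc : Fin m) (hlt : ic < jc) :
    ∃ e : (Unit ⊕ {p : PairIdx m // p.1 ≠ (ic, jc)}) ≃ PairIdx m,
      (∀ a b, Mcon m ic jc a b = (1 + (3 : ℝ)⁻¹ • Vmat m) (e a) (e b)) ∧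
      (Mcon m ic jc).det = (1 + (3 : ℝ)⁻¹ • Vmat m).det ∧
      (Mcon m ic jc).charpoly = (1 + (3 : ℝ)⁻¹ • Vmat m).charpoly := by
  have hic : ic ≠ jc := ne_of_lt hlt
  set e := conEquiv m ic jc hlt with he
  -- each model coordinate is a sign indicator on the constrained set
  have hx : ∀ (a : Unit ⊕ {p : PairIdx m // p.1 ≠ (ic, jc)})
      (π : Equiv.Perm (Fin m)), π.symm ic < π.symm jc →
      xcon m ic jc π a = sg (e a).1.1 (e a).1.2 π := by
    rintro (⟨⟩ | ⟨p, hp⟩) π h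
    · show (1:ℝ) = sg ic jc π
      exact (if_pos h).symm
    · rfl
  -- sums over the constrained set
  have hfilter : ∀ r s : PairIdx m,
      ∑ π ∈ Finset.univ.filter fun π : Equiv.Perm (Fin m) =>
          π.symm ic < π.symm jc, sg r.1.1 r.1.2 π * sg s.1.1 s.1.2 π
        = (m.factorial : ℝ) / 2 * ((1 + (3:ℝ)⁻¹ • Vmat m) r s) := by
    intro r s
    have hr : r.1.1 ≠ r.1.2 := ne_of_lt r.2
    have hs : s.1.1 ≠ s.1.2 := ne_of_lt s.2
    rw [Finset.sum_filter]
    rw [Finset.sum_congr rfl fun π _ =>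
      show (if π.symm ic < π.symm jc
          then sg r.1.1 r.1.2 π * sg s.1.1 s.1.2 π else 0)
        = sg r.1.1 r.1.2 π * sg s.1.1 s.1.2 π / 2
          + sg ic jc π * sg r.1.1 r.1.2 π * sg s.1.1 s.1.2 π / 2 by
        by_cases h : π.symm ic < π.symm jc
        · rw [if_pos h, show sg ic jc π = 1 from if_pos h]; ring
        · rw [if_neg h, show sg ic jc π = -1 from if_neg h]; ring]
    rw [Finset.sum_add_distrib, ← Finset.sum_div, ← Finset.sum_div,
      pair_sum r s, sum_sg_mul3 hic hr hs]
    ring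
  -- the cardinality of the constrained set
  have hW0 : (1 + (3:ℝ)⁻¹ • Vmat m) ⟨(ic, jc), hlt⟩ ⟨(ic, jc), hlt⟩ = 1 := by
    simp [Matrix.add_apply, Matrix.smul_apply, Matrix.one_apply_eq, Vmat]
  have hcard : (((Finset.univ.filter fun π : Equiv.Perm (Fin m) =>
      π.symm ic < π.symm jc).card : ℝ)) = (m.factorial : ℝ) / 2 := by
    have h := hfilter ⟨(ic, jc), hlt⟩ ⟨(ic, jc), hlt⟩
    rw [hW0, mul_one,
      Finset.sum_congr rfl (fun π _ => sg_mul_self ic jc π),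
      Finset.sum_const, nsmul_eq_mul, mul_one] at h
    exact h
  have hfac : (m.factorial : ℝ) ≠ 0 := by
    exact_mod_cast (Nat.factorial_pos m).ne'
  -- entrywise identity
  have hmain : ∀ a b, Mcon m ic jc a b = (1 + (3:ℝ)⁻¹ • Vmat m) (e a) (e b) := by
    intro a b
    rw [Mcon_apply, hcard,
      Finset.sum_congr rfl fun π hπ => by
        rw [hx a π (Finset.mem_filter.mp hπ).2, hx b π (Finset.mem_filter.mp hπ).2],
      hfilter (e a) (e b),
      inv_mul_cancel_left₀ (div_ne_zero hfac two_ne_zero)]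
  refine ⟨e, hmain, ?_, ?_⟩
  · have hM : Mcon m ic jc = (1 + (3:ℝ)⁻¹ • Vmat m).submatrix e e := by
      ext a b
      rw [Matrix.submatrix_apply]
      exact hmain a b
    rw [hM, Matrix.det_submatrix_equiv_self]
  · have hM : Mcon m ic jc
        = Matrix.reindex e.symm e.symm (1 + (3:ℝ)⁻¹ • Vmat m) := by
      rw [Matrix.reindex_apply, Equiv.symm_symm]
      ext a b
      rw [Matrix.submatrix_apply]
      exact hmain a b
    rw [hM, Matrix.charpoly_reindex]
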